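/- Under monotone missingness, the neighboring-case (NC) restriction f(x_s | x_{<s}, T=t) = g(x_s | x_{<s}, T=s) for all t < s is equivalent to the condition that the ratio f(T=t | x_{≤s}) / f(T=s | x_{≤s}) is constant in x_s for all t < s (assuming strict positivity). -/

import Mathlib

open Finset

/-- Marginal density of the first `s` coordinates on the event `T = t`. -/
def marg {d : ℕ} {α : Type*} [Fintype α] [DecidableEq α]
    (f : (Fin d → α) → ℝ) (s : ℕ) (x : Fin d → α) : ℝ :=
  ∑ z : Fin d → α, if ∀ j : Fin d, (j : ℕ) < s → z j = x j then f z else 0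

section aux
variable {d : ℕ} {α : Type*} [Fintype α] [DecidableEq α]

lemma marg_pos (g : (Fin d → α) → ℝ) (hg : ∀ z, 0 < g z) (s : ℕ) (x : Fin d → α) :
    0 < marg g s x := by
  unfold marg
  apply Finset.sum_pos'
  · intro z _
    split
    · exact (hg z).le
    · exact le_refl 0
  · refine ⟨x, Finset.mem_univ x, ?_⟩
    rw [if_pos (fun j _ => rfl)]
    exact hg x

lemma marg_congr (g : (Fin d → α) → ℝ) (s : ℕ) {x y : Fin d → α}
    (h : ∀ j : Fin d, (j : ℕ) < s → x j = y j) :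
    marg g s x = marg g s y := by
  unfold marg
  refine Finset.sum_congr rfl fun z _ => ?_
  have hiff : (∀ j : Fin d, (j : ℕ) < s → z j = x j) ↔
      (∀ j : Fin d, (j : ℕ) < s → z j = y j) :=
    ⟨fun hz j hj => (hz j hj).trans (h j hj), fun hz j hj => (hz j hj).trans (h j hj).symm⟩
  exact if_congr hiff rfl rfl

lemma marg_step (g : (Fin d → α) → ℝ) (s : ℕ) (hs : s < d) (x : Fin d → α) :
    marg g s x = ∑ a : α, marg g (s + 1) (Function.update x ⟨s, hs⟩ a) := by
  unfold marg
  rw [Finset.sum_comm]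
  refine Finset.sum_congr rfl fun z _ => ?_
  have key : ∀ a : α, (∀ j : Fin d, (j : ℕ) < s + 1 → z j = Function.update x ⟨s, hs⟩ a j)
      ↔ ((∀ j : Fin d, (j : ℕ) < s → z j = x j) ∧ z ⟨s, hs⟩ = a) := by
    intro a
    constructor
    · intro h
      refine ⟨fun j hj => ?_, ?_⟩
      · have hne : j ≠ ⟨s, hs⟩ := by
          intro e
          rw [e] at hj
          simp at hj
        have := h j (by omega)
        rwa [Function.update_of_ne hne] at this
      · have := h ⟨s, hs⟩ (by simp)
        rwa [Function.update_self] at this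
    · rintro ⟨h1, h2⟩ j hj
      by_cases e : j = ⟨s, hs⟩
      · subst e; rwa [Function.update_self]
      · rw [Function.update_of_ne e]
        apply h1
        have : (j : ℕ) ≠ s := fun hc => e (Fin.ext hc)
        omega
  simp only [key]
  by_cases hP : ∀ j : Fin d, (j : ℕ) < s → z j = x j
  · rw [if_pos hP]
    rw [Finset.sum_congr rfl (fun a _ => if_congr ⟨fun h => h.2, fun h => ⟨hP, h⟩⟩ rfl rfl :
      ∀ a ∈ Finset.univ, _ = ite (z ⟨s, hs⟩ = a) (g z) 0)]
    simp
  · rw [if_neg hP]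
    refine (Finset.sum_eq_zero fun a _ => ?_).symm
    rw [if_neg (by tauto)]

lemma div_swap {a b c e : ℝ} (hb : b ≠ 0) (hc : c ≠ 0) (he : e ≠ 0)
    (h : a / b = c / e) : a / c = b / e := by
  field_simp at h ⊢
  linear_combination h
end aux

/-- Under monotone missingness with strictly positive full-data
density `f(x,t)`, the neighboring-case (NC) restriction
`f(x_s | x_{<s}, T = t) = g(x_s | x_{<s}, T = s)` for all `t < s ≤ d`
is equivalent to the condition that the ratio
`f(T = t | x_{≤s}) / f(T = s | x_{≤s})` is constant in `x_s` for all `t < s`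
(i.e. depends only on `x_{<s}`; coordinates 0-indexed so `x_s` is coordinate
`s-1`). Conditional densities are ratios of marginals, and
`f(T = t | x_{≤s}) / f(T = s | x_{≤s}) = f(x_{≤s},t) / f(x_{≤s},s)`. -/
theorem neighboring_case_iff_odds_constant
    {d : ℕ} {α : Type*} [Fintype α] [DecidableEq α]
    (f : (Fin d → α) → Fin (d + 1) → ℝ) (hf : ∀ x t, 0 < f x t) :
    (∀ (t : Fin (d + 1)) (s : ℕ) (hts : (t : ℕ) < s) (hsd : s ≤ d),
        ∀ x : Fin d → α,
        marg (fun z => f z t) s x / marg (fun z => f z t) (s - 1) x =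
          marg (fun z => f z ⟨s, by omega⟩) s x /
            marg (fun z => f z ⟨s, by omega⟩) (s - 1) x)
      ↔
    (∀ (t : Fin (d + 1)) (s : ℕ) (hts : (t : ℕ) < s) (hsd : s ≤ d),
        ∀ x y : Fin d → α, (∀ j : Fin d, (j : ℕ) + 1 < s → x j = y j) →
        marg (fun z => f z t) s x / marg (fun z => f z ⟨s, by omega⟩) s x =
          marg (fun z => f z t) s y / marg (fun z => f z ⟨s, by omega⟩) s y) := by
  have hfp : ∀ (t : Fin (d+1)) (s : ℕ) (x : Fin d → α),
      0 < marg (fun z => f z t) s x := fun t s x => marg_pos _ (fun z => hf z t) s x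
  constructor
  · intro H t s hts hsd x y hxy
    set t' : Fin (d+1) := ⟨s, by omega⟩ with ht'
    have hx := div_swap (hfp t (s-1) x).ne' (hfp t' s x).ne' (hfp t' (s-1) x).ne'
      (H t s hts hsd x)
    have hy := div_swap (hfp t (s-1) y).ne' (hfp t' s y).ne' (hfp t' (s-1) y).ne'
      (H t s hts hsd y)
    have hagree : ∀ j : Fin d, (j : ℕ) < s - 1 → x j = y j := by
      intro j hj; exact hxy j (by omega)
    rw [hx, hy, marg_congr (fun z => f z t) (s-1) hagree,
      marg_congr (fun z => f z t') (s-1) hagree]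
  · intro H t s hts hsd x
    set t' : Fin (d+1) := ⟨s, by omega⟩ with ht'
    have hs1 : s - 1 < d := by omega
    have hss : s - 1 + 1 = s := by omega
    set i : Fin d := ⟨s - 1, hs1⟩ with hi
    have hstep : ∀ u : Fin (d+1), marg (fun z => f z u) (s-1) x
        = ∑ a : α, marg (fun z => f z u) s (Function.update x i a) := by
      intro u
      rw [marg_step (fun z => f z u) (s-1) hs1 x, hss]
    set r : ℝ := marg (fun z => f z t) s x / marg (fun z => f z t') s x with hr
    have hconst : ∀ a : α,
        marg (fun z => f z t) s (Function.update x i a)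
          = r * marg (fun z => f z t') s (Function.update x i a) := by
      intro a
      have hag : ∀ j : Fin d, (j : ℕ) + 1 < s → Function.update x i a j = x j := by
        intro j hj
        apply Function.update_of_ne
        intro e
        rw [e] at hj
        simp [hi] at hj
        omega
      have hthis := H t s hts hsd (Function.update x i a) x hag
      rw [← hr] at hthis
      have hpos := (hfp t' s (Function.update x i a)).ne'
      rw [div_eq_iff hpos] at hthis
      exact hthis
    have hBt : marg (fun z => f z t) (s-1) x = r * marg (fun z => f z t') (s-1) x := by
      rw [hstep t, hstep t', Finset.mul_sum]
      exact Finset.sum_congr rfl fun a _ => hconst a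
    rw [hBt, hr]
    have h1 := (hfp t' s x).ne'
    have h2 := (hfp t' (s-1) x).ne'
    have h3 := (hfp t s x).ne'
    field_simp
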